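/- (Theorem 1, full additive form.) Let Y ∈ L²(P), p ∈ ℕ, λ ≥ 0, and for each j ∈ {1, …, p} let m₁ⱼ ≤ m₂ⱼ be sub-σ-algebras of 𝒢. Suppose (g₁*, …, g_p*) with each g_j* ∈ K(m₁ⱼ, m₂ⱼ) minimizes the penalized squared-error objective F(g₁, …, g_p) := ‖Y − Σⱼ gⱼ‖₂² + 2λ Σⱼ ‖gⱼ‖₂ over the product set ∏ⱼ K(m₁ⱼ, m₂ⱼ). Then for every j, g_j* = S_λ(f_j) = (1 − λ/‖f_j‖₂)₊ · f_j a.e., where R_j := Y − Σ_{j' ≠ j} g_{j'}* is the j-th partial residual and f_j := E[R_j | m₂ⱼ] − E[R_j | m₁ⱼ]. -/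

import Mathlib

open MeasureTheory

/-- `K(m₁, m₂)`: the set of `g ∈ L²(P)` that are a.e. equal to an `m₂`-measurable function
and satisfy `E[g | m₁] = 0` a.e. -/
def memK {Ω : Type*} {𝒢 : MeasurableSpace Ω} (m₁ m₂ : MeasurableSpace Ω)
    (P : Measure[𝒢] Ω) (g : Ω → ℝ) : Prop :=
  MemLp g 2 P ∧ AEStronglyMeasurable[m₂] g P ∧ P[g|m₁] =ᵐ[P] 0

/-- The `L²(P)` norm of a real-valued function. -/
noncomputable def l2norm {Ω : Type*} {𝒢 : MeasurableSpace Ω} (P : Measure[𝒢] Ω)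
    (h : Ω → ℝ) : ℝ :=
  (eLpNorm h 2 P).toReal

section Helpers

local notation "⟪" x ", " y "⟫" => @inner ℝ _ _ x y

lemma hilbert_soft_threshold {H : Type*} [NormedAddCommGroup H] [InnerProductSpace ℝ H]
    (lam : ℝ) (hlam : 0 ≤ lam) (R F G : H)
    (o1 : ⟪R - F, G⟫ = 0) (o2 : ⟪R - F, F⟫ = 0)
    (hA : ‖R - G‖ ^ 2 + 2 * lam * ‖G‖ ≤
      ‖R - (max (1 - lam / ‖F‖) 0) • F‖ ^ 2 + 2 * lam * ‖(max (1 - lam / ‖F‖) 0) • F‖) :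
    G = (max (1 - lam / ‖F‖) 0) • F := by
  set α : ℝ := max (1 - lam / ‖F‖) 0 with hαdef
  set N : ℝ := ‖F‖ with hNdef
  set t : ℝ := ‖G‖ with htdef
  have hN0 : 0 ≤ N := norm_nonneg F
  have ht0 : 0 ≤ t := norm_nonneg G
  have hα0 : 0 ≤ α := le_max_right _ _
  have hα1 : α ≤ 1 := by
    apply max_le _ zero_le_one
    have : 0 ≤ lam / N := div_nonneg hlam hN0
    linarith
  set t₀ : ℝ := α * N with ht₀def
  have ht₀0 : 0 ≤ t₀ := mul_nonneg hα0 hN0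
  have hcase : t₀ = N - lam ∨ (t₀ = 0 ∧ N - lam ≤ 0) := by
    rcases eq_or_lt_of_le hN0 with hN | hN
    · right
      constructor
      · simp [ht₀def, ← hN]
      · linarith
    · rcases le_or_gt lam N with hl | hl
      · left
        have hα : α = 1 - lam / N := by
          apply max_eq_left
          have : lam / N ≤ 1 := (div_le_one hN).mpr hl
          linarith
        rw [ht₀def, hα]
        field_simp
      · right
        have hα : α = 0 := by
          apply max_eq_right
          have : 1 < lam / N := (one_lt_div hN).mpr hl
          linarith
        constructor
        · simp [ht₀def, hα]
        · linarith
  have e1 : ‖R - G‖ ^ 2 = ‖R - F‖ ^ 2 + ‖F - G‖ ^ 2 := by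
    have hdec : R - G = (R - F) + (F - G) := by abel
    have hinner : ⟪R - F, F - G⟫ = 0 := by
      rw [inner_sub_right, o1, o2, sub_zero]
    rw [hdec, @norm_add_sq_real, hinner]
    ring
  have e2 : ‖R - α • F‖ ^ 2 = ‖R - F‖ ^ 2 + ‖F - α • F‖ ^ 2 := by
    have hdec : R - α • F = (R - F) + (F - α • F) := by abel
    have hinner : ⟪R - F, F - α • F⟫ = 0 := by
      rw [inner_sub_right, real_inner_smul_right, o2]; ring
    rw [hdec, @norm_add_sq_real, hinner]
    ring
  have e3 : ‖F - α • F‖ = (1 - α) * N := by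
    have : F - α • F = (1 - α) • F := by rw [sub_smul, one_smul]
    rw [this, norm_smul, Real.norm_eq_abs, abs_of_nonneg (by linarith : (0:ℝ) ≤ 1 - α)]
  have e4 : ‖α • F‖ = t₀ := by
    rw [norm_smul, Real.norm_eq_abs]
    exact congrArg (· * N) (abs_of_nonneg hα0)
  have e5 : ‖F - G‖ ^ 2 = N ^ 2 - 2 * ⟪F, G⟫ + t ^ 2 := by
    rw [@norm_sub_sq_real]
  have eCS : ⟪F, G⟫ ≤ N * t := real_inner_le_norm F G
  have hA' : ‖F - G‖ ^ 2 + 2 * lam * t ≤ ((1 - α) * N) ^ 2 + 2 * lam * t₀ := by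
    rw [← e3, ← e4]
    have := hA
    rw [e1, e2] at this
    linarith
  have hq : N ^ 2 - 2 * N * t + t ^ 2 + 2 * lam * t ≤ ((1 - α) * N) ^ 2 + 2 * lam * t₀ := by
    rw [e5] at hA'
    linarith
  have hsl : 0 ≤ (t - t₀) * (t₀ - (N - lam)) := by
    rcases hcase with h | ⟨h1, h2⟩
    · rw [h]; simp
    · rw [h1]
      simp only [sub_zero, zero_sub]
      have : 0 ≤ -(N - lam) := by linarith
      exact mul_nonneg ht0 this
  have h6 : (t - t₀) ^ 2 ≤ 0 := by nlinarith [hq, hsl]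
  have ht : t = t₀ := by
    have := le_antisymm h6 (sq_nonneg _)
    have := pow_eq_zero_iff (n := 2) (by norm_num) |>.mp this
    linarith
  have hFG : ⟪F, G⟫ = N * t₀ := by
    apply le_antisymm
    · rw [← ht]; exact eCS
    · rw [e5, ht] at hA'
      nlinarith [hA']
  have hzero : ‖G - α • F‖ ^ 2 = 0 := by
    rw [@norm_sub_sq_real, real_inner_smul_right, real_inner_comm, hFG, e4, ← htdef, ht]
    ring_nf
    rw [ht₀def]; ring
  have : G - α • F = 0 := by
    have h7 : ‖G - α • F‖ = 0 := (pow_eq_zero_iff two_ne_zero).mp hzero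
    exact norm_eq_zero.mp h7
  exact sub_eq_zero.mp this

/-- The conditional expectation of an `L²` function is in `L²`. -/
lemma memℒp_two_condexp {Ω : Type*} {m 𝒢 : MeasurableSpace Ω} {P : Measure Ω}
    [IsProbabilityMeasure P] (hm : m ≤ 𝒢) {f : Ω → ℝ}
    (hf : MemLp f 2 P) : MemLp (P[f|m]) 2 P := by
  have hG : ((condExpL2 ℝ ℝ hm (hf.toLp f) : lpMeas ℝ ℝ m 2 P) : Lp ℝ 2 P) =ᵐ[P] P[f|m] := by
    refine ae_eq_condExp_of_forall_setIntegral_eq hm (hf.integrable one_le_two) ?_ ?_ ?_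
    · intro s _ hμs
      exact integrableOn_Lp_of_measure_ne_top _ one_le_two hμs.ne
    · intro s hs hμs
      rw [integral_condExpL2_eq hm (hf.toLp f) hs hμs.ne]
      exact setIntegral_congr_ae (hm s hs) ((hf.coeFn_toLp).mono fun ω hω _ => hω)
    · exact lpMeas.aestronglyMeasurable _
  exact (Lp.memLp _).ae_eq hG

lemma integrable_mul_of_memℒp_two {Ω : Type*} {𝒢 : MeasurableSpace Ω} {P : Measure Ω}
    {f g : Ω → ℝ} (hf : MemLp f 2 P) (hg : MemLp g 2 P) :
    Integrable (fun ω => f ω * g ω) P := by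
  have h := L2.integrable_inner (𝕜 := ℝ) (hf.toLp f) (hg.toLp g)
  refine h.congr ?_
  filter_upwards [hf.coeFn_toLp, hg.coeFn_toLp] with ω h1 h2
  simp [h1, h2, RCLike.inner_apply, mul_comm]

/-- Orthogonality: `R - (E[R|m₂] - E[R|m₁])` is orthogonal to every `g ∈ K(m₁, m₂)`. -/
lemma integral_residual_mul_eq_zero {Ω : Type*} {m₁ m₂ 𝒢 : MeasurableSpace Ω} {P : Measure Ω}
    [IsProbabilityMeasure P] (h12 : m₁ ≤ m₂) (h2 : m₂ ≤ 𝒢)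
    {R g : Ω → ℝ} (hR : MemLp R 2 P) (hg : MemLp g 2 P)
    (hgm : AEStronglyMeasurable[m₂] g P) (hgc : P[g|m₁] =ᵐ[P] 0) :
    ∫ ω, (R ω - ((P[R|m₂]) ω - (P[R|m₁]) ω)) * g ω ∂P = 0 := by
  have h1 : m₁ ≤ 𝒢 := h12.trans h2
  have hint1 : Integrable (fun ω => R ω * g ω) P := integrable_mul_of_memℒp_two hR hg
  have hint2 : Integrable (fun ω => (P[R|m₂]) ω * g ω) P :=
    integrable_mul_of_memℒp_two (memℒp_two_condexp h2 hR) hg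
  have hint3 : Integrable (fun ω => (P[R|m₁]) ω * g ω) P :=
    integrable_mul_of_memℒp_two (memℒp_two_condexp h1 hR) hg
  have key1 : ∫ ω, R ω * g ω ∂P = ∫ ω, (P[R|m₂]) ω * g ω ∂P := by
    have hpull : P[g * R|m₂] =ᵐ[P] g * P[R|m₂] :=
      condExp_mul_of_aestronglyMeasurable_left hgm
        (by rw [mul_comm]; exact hint1)
        (hR.integrable one_le_two)
    calc ∫ ω, R ω * g ω ∂P = ∫ ω, (g * R) ω ∂P := by simp [mul_comm]
      _ = ∫ ω, (P[g * R|m₂]) ω ∂P := (integral_condExp h2).symm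
      _ = ∫ ω, (g * P[R|m₂]) ω ∂P := integral_congr_ae hpull
      _ = ∫ ω, (P[R|m₂]) ω * g ω ∂P := by simp [mul_comm]
  have key2 : ∫ ω, (P[R|m₁]) ω * g ω ∂P = 0 := by
    have hmeas : StronglyMeasurable[m₁] (P[R|m₁]) := stronglyMeasurable_condExp
    have hpull : P[(P[R|m₁]) * g|m₁] =ᵐ[P] (P[R|m₁]) * P[g|m₁] :=
      condExp_mul_of_stronglyMeasurable_left hmeas hint3 (hg.integrable one_le_two)
    have hz : P[(P[R|m₁]) * g|m₁] =ᵐ[P] 0 := by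
      refine hpull.trans ?_
      filter_upwards [hgc] with ω hω
      simp only [Pi.mul_apply, hω, Pi.zero_apply, mul_zero]
    calc ∫ ω, (P[R|m₁]) ω * g ω ∂P = ∫ ω, ((P[R|m₁]) * g) ω ∂P := rfl
      _ = ∫ ω, (P[(P[R|m₁]) * g|m₁]) ω ∂P := (integral_condExp h1).symm
      _ = 0 := by rw [integral_congr_ae hz]; simp
  calc ∫ ω, (R ω - ((P[R|m₂]) ω - (P[R|m₁]) ω)) * g ω ∂P
      = (∫ ω, R ω * g ω ∂P - ∫ ω, (P[R|m₂]) ω * g ω ∂P) + ∫ ω, (P[R|m₁]) ω * g ω ∂P := by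
        have hint12 : Integrable (fun ω => R ω * g ω - (P[R|m₂]) ω * g ω) P := hint1.sub hint2
        rw [← integral_sub hint1 hint2, ← integral_add hint12 hint3]
        refine integral_congr_ae (Filter.Eventually.of_forall fun ω => ?_)
        simp only [Pi.sub_apply]; ring
    _ = 0 := by rw [key1, key2]; ring

lemma inner_toLp_eq {Ω : Type*} {𝒢 : MeasurableSpace Ω} {P : Measure Ω}
    {f g : Ω → ℝ} (hf : MemLp f 2 P) (hg : MemLp g 2 P) :
    ⟪hf.toLp f, hg.toLp g⟫ = ∫ ω, f ω * g ω ∂P := by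
  rw [L2.inner_def]
  refine integral_congr_ae ?_
  filter_upwards [hf.coeFn_toLp, hg.coeFn_toLp] with ω h1 h2
  simp [h1, h2, RCLike.inner_apply, mul_comm]

end Helpers

/-- Theorem 1 (full additive form): if `(g₁*, …, g_p*)`, with `g_j* ∈ K(m₁ⱼ, m₂ⱼ)`, minimizes
`F(g₁, …, g_p) = ‖Y − Σⱼ gⱼ‖₂² + 2λ Σⱼ ‖gⱼ‖₂` over `∏ⱼ K(m₁ⱼ, m₂ⱼ)`, then for every `j`,
`g_j* = S_λ(f_j) = (1 − λ/‖f_j‖₂)₊ · f_j` a.e., where `R_j := Y − Σ_{j' ≠ j} g_{j'}*` is the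
`j`-th partial residual and `f_j := E[R_j | m₂ⱼ] − E[R_j | m₁ⱼ]`. -/


theorem sparse_additive_minimizer_is_soft_thresholded {Ω : Type*} {𝒢 : MeasurableSpace Ω}
    (P : Measure Ω) [IsProbabilityMeasure P] (p : ℕ)
    (m₁ m₂ : Fin p → MeasurableSpace Ω)
    (h12 : ∀ j, m₁ j ≤ m₂ j) (h2 : ∀ j, m₂ j ≤ 𝒢)
    (Y : Ω → ℝ) (hY : MemLp Y 2 P) (lam : ℝ) (hlam : 0 ≤ lam)
    (gStar : Fin p → Ω → ℝ) (hgStar : ∀ j, memK (m₁ j) (m₂ j) P (gStar j))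
    (hmin : ∀ g : Fin p → Ω → ℝ, (∀ j, memK (m₁ j) (m₂ j) P (g j)) →
      l2norm P (fun ω => Y ω - ∑ j, gStar j ω) ^ 2 + 2 * lam * ∑ j, l2norm P (gStar j) ≤
        l2norm P (fun ω => Y ω - ∑ j, g j ω) ^ 2 + 2 * lam * ∑ j, l2norm P (g j)) :
    ∀ j : Fin p,
      let Rj : Ω → ℝ := fun ω => Y ω - ∑ j' ∈ Finset.univ.erase j, gStar j' ω
      let fj : Ω → ℝ := fun ω => (P[Rj|m₂ j]) ω - (P[Rj|m₁ j]) ω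
      gStar j =ᵐ[P] fun ω => max (1 - lam / l2norm P fj) 0 * fj ω := by
  intro j Rj fj
  have hRdef : Rj = fun ω => Y ω - ∑ j' ∈ Finset.univ.erase j, gStar j' ω := rfl
  have hfdef : fj = fun ω => (P[Rj|m₂ j]) ω - (P[Rj|m₁ j]) ω := rfl
  clear_value Rj fj
  have h1j : m₁ j ≤ 𝒢 := (h12 j).trans (h2 j)
  have hRj : MemLp Rj 2 P := by
    rw [hRdef]
    exact hY.sub (memLp_finset_sum _ (fun i _ => (hgStar i).1))
  have hfj : MemLp fj 2 P := by
    rw [hfdef]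
    exact ((memℒp_two_condexp (h2 j) hRj).sub (memℒp_two_condexp h1j hRj))
  -- fj belongs to K(m₁ j, m₂ j)
  have hfjm : AEStronglyMeasurable[m₂ j] fj P := by
    rw [hfdef]
    exact (stronglyMeasurable_condExp.aestronglyMeasurable).sub
      ((stronglyMeasurable_condExp.mono (h12 j)).aestronglyMeasurable)
  have hfjc : P[fj|m₁ j] =ᵐ[P] 0 := by
    have hsub : P[fj|m₁ j] =ᵐ[P] P[P[Rj|m₂ j]|m₁ j] - P[P[Rj|m₁ j]|m₁ j] := by
      rw [hfdef]
      exact condExp_sub (integrable_condExp : Integrable (P[Rj|m₂ j]) P)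
        (integrable_condExp : Integrable (P[Rj|m₁ j]) P) (m₁ j)
    have htow : P[P[Rj|m₂ j]|m₁ j] =ᵐ[P] P[Rj|m₁ j] :=
      condExp_condExp_of_le (h12 j) (h2 j)
    have hfix : P[P[Rj|m₁ j]|m₁ j] = P[Rj|m₁ j] :=
      condExp_of_stronglyMeasurable h1j stronglyMeasurable_condExp integrable_condExp
    filter_upwards [hsub, htow] with ω hω1 hω2
    rw [hω1, Pi.sub_apply, hω2, hfix]
    simp
  set N : ℝ := l2norm P fj with hNdef
  set α : ℝ := max (1 - lam / N) 0 with hαdef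
  set c : Ω → ℝ := α • fj with hcdef
  have hcM : MemLp c 2 P := hfj.const_smul α
  have hcK : memK (m₁ j) (m₂ j) P c := by
    refine ⟨hcM, hfjm.const_smul α, ?_⟩
    filter_upwards [condExp_smul (m := m₁ j) α fj, hfjc] with ω hω1 hω2
    refine (hω1.trans ?_ : (P[c|m₁ j]) ω = _)
    rw [Pi.smul_apply, hω2]
    simp
  -- competitor
  set g' : Fin p → Ω → ℝ := Function.update gStar j c with hg'def
  have hg'K : ∀ i, memK (m₁ i) (m₂ i) P (g' i) := by
    intro i
    by_cases hi : i = j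
    · subst hi; simpa [hg'def, Function.update_self] using hcK
    · simpa [hg'def, Function.update_of_ne hi] using hgStar i
  -- rewrite the objective values
  have hY1 : (fun ω => Y ω - ∑ i, gStar i ω) = fun ω => Rj ω - gStar j ω := by
    funext ω
    have h := Finset.add_sum_erase Finset.univ (fun i => gStar i ω) (Finset.mem_univ j)
    rw [hRdef]
    dsimp only
    linarith
  have hY2 : (fun ω => Y ω - ∑ i, g' i ω) = fun ω => Rj ω - c ω := by
    funext ω
    have h := Finset.add_sum_erase Finset.univ (fun i => g' i ω) (Finset.mem_univ j)
    have he : ∑ i ∈ Finset.univ.erase j, g' i ω = ∑ i ∈ Finset.univ.erase j, gStar i ω :=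
      Finset.sum_congr rfl fun i hi => by
        rw [hg'def, Function.update_of_ne (Finset.ne_of_mem_erase hi)]
    have hj : g' j ω = c ω := by rw [hg'def, Function.update_self]
    rw [hRdef]
    dsimp only
    linarith
  have hsumNorm1 : ∑ i, l2norm P (gStar i)
      = l2norm P (gStar j) + ∑ i ∈ Finset.univ.erase j, l2norm P (gStar i) :=
    (Finset.add_sum_erase Finset.univ (fun i => l2norm P (gStar i)) (Finset.mem_univ j)).symm
  have hsumNorm2 : ∑ i, l2norm P (g' i)
      = l2norm P c + ∑ i ∈ Finset.univ.erase j, l2norm P (gStar i) := by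
    rw [← Finset.add_sum_erase Finset.univ (fun i => l2norm P (g' i)) (Finset.mem_univ j)]
    congr 1
    · rw [hg'def, Function.update_self]
    · exact Finset.sum_congr rfl fun i hi => by
        rw [hg'def, Function.update_of_ne (Finset.ne_of_mem_erase hi)]
  have hA0 : l2norm P (fun ω => Rj ω - gStar j ω) ^ 2 + 2 * lam * l2norm P (gStar j)
      ≤ l2norm P (fun ω => Rj ω - c ω) ^ 2 + 2 * lam * l2norm P c := by
    have h := hmin g' hg'K
    rw [hY1, hY2, hsumNorm1, hsumNorm2] at h
    ring_nf at h ⊢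
    linarith
  -- move to the Hilbert space L²
  set F : Lp ℝ 2 P := hfj.toLp fj with hFdef
  set G : Lp ℝ 2 P := (hgStar j).1.toLp (gStar j) with hGdef
  set Rl : Lp ℝ 2 P := hRj.toLp Rj with hRldef
  have hNF : ‖F‖ = N := by rw [hFdef, Lp.norm_toLp]; rfl
  have hnormG : l2norm P (gStar j) = ‖G‖ := by rw [hGdef, Lp.norm_toLp]; rfl
  have hnormC : l2norm P c = ‖α • F‖ := by
    rw [hFdef, ← MemLp.toLp_const_smul α hfj, Lp.norm_toLp]; rfl
  have hnorm1 : l2norm P (fun ω => Rj ω - gStar j ω) = ‖Rl - G‖ := by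
    rw [hRldef, hGdef, ← MemLp.toLp_sub hRj (hgStar j).1, Lp.norm_toLp]; rfl
  have hnorm2 : l2norm P (fun ω => Rj ω - c ω) = ‖Rl - α • F‖ := by
    rw [hRldef, hFdef, ← MemLp.toLp_const_smul α hfj, ← MemLp.toLp_sub hRj hcM, Lp.norm_toLp]; rfl
  -- orthogonality
  have horth : ∀ (g : Ω → ℝ) (hg : MemLp g 2 P), AEStronglyMeasurable[m₂ j] g P →
      P[g|m₁ j] =ᵐ[P] 0 → @inner ℝ _ _ (Rl - F) (hg.toLp g) = 0 := by
    intro g hg hgm hgc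
    have hsub : Rl - F = (hRj.sub hfj).toLp (Rj - fj) := by
      rw [MemLp.toLp_sub hRj hfj, hRldef, hFdef]
    rw [hsub, inner_toLp_eq]
    have hz := integral_residual_mul_eq_zero (h12 j) (h2 j) hRj hg hgm hgc
    rw [← hz]
    refine integral_congr_ae (Filter.Eventually.of_forall fun ω => ?_)
    simp only [Pi.sub_apply, hfdef]
  have o1 : @inner ℝ _ _ (Rl - F) G = 0 :=
    horth (gStar j) (hgStar j).1 (hgStar j).2.1 (hgStar j).2.2
  have o2 : @inner ℝ _ _ (Rl - F) F = 0 := horth fj hfj hfjm hfjc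
  -- apply the Hilbert-space lemma
  have hA : ‖Rl - G‖ ^ 2 + 2 * lam * ‖G‖ ≤
      ‖Rl - (max (1 - lam / ‖F‖) 0) • F‖ ^ 2 + 2 * lam * ‖(max (1 - lam / ‖F‖) 0) • F‖ := by
    rw [hNF, ← hαdef, ← hnorm1, ← hnorm2, ← hnormG, ← hnormC]
    exact hA0
  have hG : G = (max (1 - lam / ‖F‖) 0) • F := hilbert_soft_threshold lam hlam Rl F G o1 o2 hA
  rw [hNF, ← hαdef] at hG
  -- conclude the a.e. statement
  have : (hgStar j).1.toLp (gStar j) = (hfj.const_smul α).toLp (α • fj) := by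
    rw [MemLp.toLp_const_smul α hfj, ← hFdef, ← hGdef]
    exact hG
  have hae : gStar j =ᵐ[P] α • fj := (MemLp.toLp_eq_toLp_iff _ _).mp this
  refine hae.trans (Filter.Eventually.of_forall fun ω => ?_)
  rw [Pi.smul_apply, smul_eq_mul, hαdef, hNdef]
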